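/- arXiv:1411.4112 — 2 statements merged into one kernel-verified Lean document; each statement's English description precedes it below -/
import Mathlib

section
/- Fix t' ∈ ℝ and x' ∈ ℝ^d, and define G : {t ∈ ℝ : 0 < ω(t − t') < π} × ℝ^d → ℂ by G(t,x) = ( mω/(2πiħ·sin(ω(t − t'))) )^{d/2} · exp( (i·mω/(2ħ·sin(ω(t − t')))) · ( (‖x‖² + ‖x'‖²)·cos(ω(t − t')) − 2·(x·x') ) ), where w^{d/2} denotes the principal branch of the complex power. Then G satisfies the harmonic oscillator Schrödinger equation iħ·∂G/∂t + (ħ²/(2m))·Δ_x G − (1/2)·m·ω²·‖x‖²·G = 0 at every point (t,x) with 0 < ω(t − t') < π. -/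
open scoped RealInnerProductSpace

/-- Directional derivative of a complex-valued function on `ℝ^d` along `v`. -/
noncomputable def dirDeriv {d : ℕ} (v : EuclideanSpace ℝ (Fin d))
    (g : EuclideanSpace ℝ (Fin d) → ℂ) (x : EuclideanSpace ℝ (Fin d)) : ℂ :=
  deriv (fun r : ℝ => g (x + r • v)) 0

/-- The Laplacian `Δg = ∑_{j=1}^d ∂²g/∂x_j²` of a complex-valued function on `ℝ^d`. -/
noncomputable def laplacian {d : ℕ} (g : EuclideanSpace ℝ (Fin d) → ℂ) :
    EuclideanSpace ℝ (Fin d) → ℂ :=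
  fun x => ∑ j : Fin d,
    dirDeriv (EuclideanSpace.single j (1 : ℝ))
      (dirDeriv (EuclideanSpace.single j (1 : ℝ)) g) x

/-- `I(u,v) = (1/(mω))·∫_v^u f(s)·sin(ω(s−v)) ds ∈ ℝ^d`. -/
noncomputable def Ivec {d : ℕ} (m ω : ℝ) (f : ℝ → EuclideanSpace ℝ (Fin d)) (u v : ℝ) :
    EuclideanSpace ℝ (Fin d) :=
  (1 / (m * ω)) • ∫ s in v..u, Real.sin (ω * (s - v)) • f s

/-- `J(u,v) = (1/(m²ω²))·∫_v^u ∫_v^s (f(s)·f(s'))·sin(ω(u−s))·sin(ω(s'−v)) ds' ds ∈ ℝ`. -/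
noncomputable def Jval {d : ℕ} (m ω : ℝ) (f : ℝ → EuclideanSpace ℝ (Fin d)) (u v : ℝ) : ℝ :=
  (1 / (m ^ 2 * ω ^ 2)) * ∫ s in v..u, ∫ s' in v..s,
    (⟪f s, f s'⟫ : ℝ) * Real.sin (ω * (u - s)) * Real.sin (ω * (s' - v))

open Complex

variable {d : ℕ}

lemma quad_expand (α β γ : ℝ) (x' v x : EuclideanSpace ℝ (Fin d)) (r : ℝ) :
    α * ‖x + r • v‖ ^ 2 + β * (⟪x + r • v, x'⟫ : ℝ) + γ
      = (α * ‖x‖ ^ 2 + β * ⟪x, x'⟫ + γ) + (2 * α * ⟪x, v⟫ + β * ⟪v, x'⟫) * r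
        + (α * ‖v‖ ^ 2) * r ^ 2 := by
  rw [@norm_add_sq_real, inner_add_left, real_inner_smul_right, real_inner_smul_left,
    norm_smul]
  simp [Real.norm_eq_abs, mul_pow, sq_abs]
  ring

lemma hasDerivAt_quadExp (A : ℂ) (α β γ : ℝ) (x' v x : EuclideanSpace ℝ (Fin d)) :
    HasDerivAt (fun r : ℝ => A * Complex.exp (Complex.I *
        ((α * ‖x + r • v‖ ^ 2 + β * (⟪x + r • v, x'⟫ : ℝ) + γ : ℝ) : ℂ)))
      (A * Complex.exp (Complex.I * ((α * ‖x‖ ^ 2 + β * (⟪x, x'⟫ : ℝ) + γ : ℝ) : ℂ))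
        * (Complex.I * ((2 * α * ⟪x, v⟫ + β * ⟪v, x'⟫ : ℝ) : ℂ))) 0 := by
  have hp : HasDerivAt (fun r : ℝ => (α * ‖x‖ ^ 2 + β * (⟪x, x'⟫:ℝ) + γ)
      + (2 * α * ⟪x, v⟫ + β * ⟪v, x'⟫) * r + (α * ‖v‖ ^ 2) * r ^ 2)
      (2 * α * ⟪x, v⟫ + β * ⟪v, x'⟫) 0 := by
    have h1 : HasDerivAt (fun r : ℝ => (α * ‖v‖ ^ 2) * r ^ 2) 0 0 := by
      simpa using (hasDerivAt_pow 2 (0:ℝ)).const_mul (α * ‖v‖ ^ 2)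
    have h2 : HasDerivAt (fun r : ℝ => (α * ‖x‖ ^ 2 + β * (⟪x, x'⟫:ℝ) + γ)
        + (2 * α * ⟪x, v⟫ + β * ⟪v, x'⟫) * r) (2 * α * ⟪x, v⟫ + β * ⟪v, x'⟫) 0 := by
      simpa using ((hasDerivAt_id (0:ℝ)).const_mul (2 * α * ⟪x, v⟫ + β * ⟪v, x'⟫)).const_add
        (α * ‖x‖ ^ 2 + β * (⟪x, x'⟫:ℝ) + γ)
    have h3 := h2.add h1
    simp only [add_zero] at h3
    exact h3
  have := (((hp.ofReal_comp).const_mul Complex.I).cexp).const_mul A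
  simp only [quad_expand α β γ x' v x]
  convert this using 1
  next => rfl
  next => push_cast; simp; ring_nf


lemma dirDeriv_E (A : ℂ) (α β γ : ℝ) (x' v x : EuclideanSpace ℝ (Fin d)) :
    dirDeriv v (fun y => A * Complex.exp (Complex.I *
        ((α * ‖y‖ ^ 2 + β * (⟪y, x'⟫ : ℝ) + γ : ℝ) : ℂ))) x
      = (A * Complex.exp (Complex.I * ((α * ‖x‖ ^ 2 + β * (⟪x, x'⟫ : ℝ) + γ : ℝ) : ℂ)))
        * (Complex.I * ((2 * α * ⟪x, v⟫ + β * ⟪v, x'⟫ : ℝ) : ℂ)) :=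
  (hasDerivAt_quadExp A α β γ x' v x).deriv

lemma dirDeriv2_E (A : ℂ) (α β γ : ℝ) (x' v x : EuclideanSpace ℝ (Fin d)) :
    dirDeriv v (dirDeriv v (fun y => A * Complex.exp (Complex.I *
        ((α * ‖y‖ ^ 2 + β * (⟪y, x'⟫ : ℝ) + γ : ℝ) : ℂ)))) x
      = (A * Complex.exp (Complex.I * ((α * ‖x‖ ^ 2 + β * (⟪x, x'⟫ : ℝ) + γ : ℝ) : ℂ)))
        * ((Complex.I * ((2 * α * ⟪x, v⟫ + β * ⟪v, x'⟫ : ℝ) : ℂ)) ^ 2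
            + Complex.I * ((2 * α * ‖v‖ ^ 2 : ℝ) : ℂ)) := by
  have hre : ∀ r : ℝ, (2 * α * ⟪x + r • v, v⟫ + β * ⟪v, x'⟫ : ℝ)
      = (2 * α * ⟪x, v⟫ + β * ⟪v, x'⟫) + (2 * α * ‖v‖ ^ 2) * r := by
    intro r
    rw [inner_add_left, real_inner_smul_left, real_inner_self_eq_norm_sq]
    ring
  have hfun : (fun r : ℝ => dirDeriv v (fun y => A * Complex.exp (Complex.I *
        ((α * ‖y‖ ^ 2 + β * (⟪y, x'⟫ : ℝ) + γ : ℝ) : ℂ))) (x + r • v))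
      = fun r : ℝ => (A * Complex.exp (Complex.I *
        ((α * ‖x + r • v‖ ^ 2 + β * (⟪x + r • v, x'⟫ : ℝ) + γ : ℝ) : ℂ)))
        * (Complex.I * ((((2 * α * ⟪x, v⟫ + β * ⟪v, x'⟫) + (2 * α * ‖v‖ ^ 2) * r : ℝ)) : ℂ)) := by
    funext r
    rw [dirDeriv_E, ← hre r]
  have hd2 : dirDeriv v (dirDeriv v (fun y => A * Complex.exp (Complex.I *
        ((α * ‖y‖ ^ 2 + β * (⟪y, x'⟫ : ℝ) + γ : ℝ) : ℂ)))) x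
      = deriv (fun r : ℝ => dirDeriv v (fun y => A * Complex.exp (Complex.I *
        ((α * ‖y‖ ^ 2 + β * (⟪y, x'⟫ : ℝ) + γ : ℝ) : ℂ))) (x + r • v)) 0 := rfl
  rw [hd2, hfun]
  have h2 : HasDerivAt (fun r : ℝ => (Complex.I *
      ((((2 * α * ⟪x, v⟫ + β * ⟪v, x'⟫) + (2 * α * ‖v‖ ^ 2) * r : ℝ)) : ℂ)))
      (Complex.I * ((2 * α * ‖v‖ ^ 2 : ℝ) : ℂ)) 0 := by
    have : HasDerivAt (fun r : ℝ => ((2 * α * ⟪x, v⟫ + β * ⟪v, x'⟫) + (2 * α * ‖v‖ ^ 2) * r))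
        (2 * α * ‖v‖ ^ 2) 0 := by
      simpa using ((hasDerivAt_id (0:ℝ)).const_mul (2 * α * ‖v‖ ^ 2)).const_add
        (2 * α * ⟪x, v⟫ + β * ⟪v, x'⟫)
    exact (this.ofReal_comp).const_mul Complex.I
  have := ((hasDerivAt_quadExp A α β γ x' v x).mul h2).deriv
  erw [this]
  push_cast
  simp
  ring

lemma laplacian_E (A : ℂ) (α β γ : ℝ) (x' x : EuclideanSpace ℝ (Fin d)) :
    laplacian (fun y => A * Complex.exp (Complex.I *
        ((α * ‖y‖ ^ 2 + β * (⟪y, x'⟫ : ℝ) + γ : ℝ) : ℂ))) x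
      = (A * Complex.exp (Complex.I * ((α * ‖x‖ ^ 2 + β * (⟪x, x'⟫ : ℝ) + γ : ℝ) : ℂ)))
        * ((d : ℂ) * Complex.I * ((2 * α : ℝ) : ℂ)
          - ((4 * α ^ 2 * ‖x‖ ^ 2 + 4 * α * β * (⟪x, x'⟫ : ℝ) + β ^ 2 * ‖x'‖ ^ 2 : ℝ) : ℂ)) := by
  have hx : ‖x‖ ^ 2 = ∑ j, x j * x j := by
    rw [← real_inner_self_eq_norm_sq, PiLp.inner_apply]
    simp [RCLike.inner_apply]; exact Finset.sum_congr rfl fun j _ => by ring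
  have hx' : ‖x'‖ ^ 2 = ∑ j, x' j * x' j := by
    rw [← real_inner_self_eq_norm_sq, PiLp.inner_apply]
    simp [RCLike.inner_apply]; exact Finset.sum_congr rfl fun j _ => by ring
  have hxx' : (⟪x, x'⟫ : ℝ) = ∑ j, x j * x' j := by
    rw [PiLp.inner_apply]; simp [RCLike.inner_apply]; exact Finset.sum_congr rfl fun j _ => by ring
  have hsum : ∑ j, (2 * α * x j + β * x' j) ^ 2
      = 4 * α ^ 2 * ‖x‖ ^ 2 + 4 * α * β * (⟪x, x'⟫ : ℝ) + β ^ 2 * ‖x'‖ ^ 2 := by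
    rw [hx, hx', hxx', Finset.mul_sum, Finset.mul_sum, Finset.mul_sum,
      ← Finset.sum_add_distrib, ← Finset.sum_add_distrib]
    exact Finset.sum_congr rfl fun j _ => by ring
  unfold laplacian
  have hterm : ∀ j : Fin d,
      dirDeriv (EuclideanSpace.single j (1 : ℝ))
        (dirDeriv (EuclideanSpace.single j (1 : ℝ)) (fun y => A * Complex.exp (Complex.I *
          ((α * ‖y‖ ^ 2 + β * (⟪y, x'⟫ : ℝ) + γ : ℝ) : ℂ)))) x
      = (A * Complex.exp (Complex.I * ((α * ‖x‖ ^ 2 + β * (⟪x, x'⟫ : ℝ) + γ : ℝ) : ℂ)))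
        * (Complex.I * ((2 * α : ℝ) : ℂ)
            - (((2 * α * x j + β * x' j : ℝ) : ℂ)) ^ 2) := by
    intro j
    rw [dirDeriv2_E]
    have h1 : (⟪x, EuclideanSpace.single j (1 : ℝ)⟫ : ℝ) = x j := by
      rw [EuclideanSpace.inner_single_right]; simp
    have h2 : (⟪EuclideanSpace.single j (1 : ℝ), x'⟫ : ℝ) = x' j := by
      rw [EuclideanSpace.inner_single_left]; simp
    have h3 : ‖EuclideanSpace.single j (1 : ℝ)‖ = 1 := by
      rw [EuclideanSpace.norm_single]; simp
    rw [h1, h2, h3]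
    push_cast
    ring_nf
    rw [Complex.I_sq]
    ring
  rw [Finset.sum_congr rfl fun j _ => hterm j, ← Finset.mul_sum,
    Finset.sum_sub_distrib, Finset.sum_const, Finset.card_univ, Fintype.card_fin]
  congr 1
  rw [nsmul_eq_mul, ← hsum]
  push_cast
  ring

set_option maxHeartbeats 2000000 in
/-- Fix `ħ > 0`, `m > 0`, `ω > 0`, `d ≥ 1`, `t' ∈ ℝ` and `x' ∈ ℝ^d`.  The
harmonic oscillator propagator
`G(t,x) = (mω/(2πiħ sin(ω(t−t'))))^{d/2}·exp((imω/(2ħ sin(ω(t−t'))))·((‖x‖²+‖x'‖²)cos(ω(t−t')) − 2x·x'))`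
(with the principal branch of the complex power) satisfies
`iħ·∂G/∂t + (ħ²/(2m))·Δ_x G − (1/2)mω²‖x‖²·G = 0` whenever `0 < ω(t−t') < π`. -/
theorem harmonic_oscillator_propagator_schrodinger
    (hbar m ω : ℝ) (hhbar : 0 < hbar) (hm : 0 < m) (hω : 0 < ω)
    (d : ℕ) (hd : 1 ≤ d) (t' : ℝ) (x' : EuclideanSpace ℝ (Fin d))
    (G : ℝ → EuclideanSpace ℝ (Fin d) → ℂ)
    (hG : ∀ (t : ℝ) (x : EuclideanSpace ℝ (Fin d)),
      G t x = ((m : ℂ) * (ω : ℂ)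
            / (2 * (Real.pi : ℂ) * Complex.I * (hbar : ℂ)
                * ((Real.sin (ω * (t - t')) : ℝ) : ℂ))) ^ ((d : ℂ) / 2)
        * Complex.exp (Complex.I *
            (((m * ω / (2 * hbar * Real.sin (ω * (t - t')))) *
              ((‖x‖ ^ 2 + ‖x'‖ ^ 2) * Real.cos (ω * (t - t'))
                - 2 * (⟪x, x'⟫ : ℝ)) : ℝ) : ℂ))) :
    ∀ (t : ℝ) (x : EuclideanSpace ℝ (Fin d)), 0 < ω * (t - t') → ω * (t - t') < Real.pi →
      Complex.I * (hbar : ℂ) * deriv (fun s : ℝ => G s x) t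
        + ((hbar : ℂ) ^ 2 / (2 * (m : ℂ))) * laplacian (G t) x
        - (1 / 2) * (m : ℂ) * (ω : ℂ) ^ 2 * ((‖x‖ ^ 2 : ℝ) : ℂ) * G t x = 0 := by
  intro t x h1 h2
  have hs : 0 < Real.sin (ω * (t - t')) := Real.sin_pos_of_pos_of_lt_pi h1 h2
  set s := Real.sin (ω * (t - t')) with hsdef
  set c := Real.cos (ω * (t - t')) with hcdef
  set α : ℝ := m * ω * c / (2 * hbar * s) with hαdef
  set β : ℝ := -(m * ω) / (hbar * s) with hβdef
  set γ : ℝ := α * ‖x'‖ ^ 2 with hγdef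
  set A : ℂ := ((m : ℂ) * ω / (2 * (Real.pi:ℂ) * I * hbar * (s:ℂ))) ^ ((d:ℂ)/2) with hAdef
  have hsne : s ≠ 0 := ne_of_gt hs
  have hbne : hbar ≠ 0 := ne_of_gt hhbar
  have hmne : m ≠ 0 := ne_of_gt hm
  have hωne : ω ≠ 0 := ne_of_gt hω
  -- spatial form
  have harg : ∀ y : EuclideanSpace ℝ (Fin d),
      (m * ω / (2 * hbar * s)) * ((‖y‖ ^ 2 + ‖x'‖ ^ 2) * c - 2 * (⟪y, x'⟫ : ℝ))
        = α * ‖y‖ ^ 2 + β * (⟪y, x'⟫ : ℝ) + γ := by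
    intro y
    rw [hαdef, hβdef, hγdef, hαdef]
    field_simp
    ring
  have hGt : G t = fun y => A * Complex.exp (Complex.I *
      ((α * ‖y‖ ^ 2 + β * (⟪y, x'⟫ : ℝ) + γ : ℝ) : ℂ)) := by
    funext y
    rw [hG t y, ← harg y]
  -- Laplacian value
  have hLap : laplacian (G t) x
      = G t x * ((d : ℂ) * Complex.I * ((2 * α : ℝ) : ℂ)
          - ((4 * α ^ 2 * ‖x‖ ^ 2 + 4 * α * β * (⟪x, x'⟫ : ℝ) + β ^ 2 * ‖x'‖ ^ 2 : ℝ) : ℂ)) := by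
    rw [hGt, laplacian_E]
  -- time derivative
  have hθ' : HasDerivAt (fun u : ℝ => ω * (u - t')) ω t := by
    simpa using ((hasDerivAt_id t).sub_const t').const_mul ω
  have hsin : HasDerivAt (fun u : ℝ => Real.sin (ω * (u - t'))) (c * ω) t :=
    by have h := (Real.hasDerivAt_sin (ω * (t - t'))).comp t hθ'; exact h
  have hcos : HasDerivAt (fun u : ℝ => Real.cos (ω * (u - t'))) (-s * ω) t :=
    by have h := (Real.hasDerivAt_cos (ω * (t - t'))).comp t hθ'; exact h
  have hDne : (2 * (Real.pi:ℂ) * I * hbar * (s:ℂ)) ≠ 0 := by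
    simp [Complex.ext_iff, Real.pi_ne_zero, hbne, hsne]
  have hD : HasDerivAt (fun u : ℝ => (2 * (Real.pi:ℂ) * I * hbar
      * ((Real.sin (ω * (u - t')) : ℝ) : ℂ))) (2 * (Real.pi:ℂ) * I * hbar * ((c * ω : ℝ) : ℂ)) t :=
    (hsin.ofReal_comp).const_mul _
  have hw : HasDerivAt (fun u : ℝ => ((m:ℂ) * ω
      / (2 * (Real.pi:ℂ) * I * hbar * ((Real.sin (ω * (u - t')) : ℝ) : ℂ))))
      ((0 * (2 * (Real.pi:ℂ) * I * hbar * (s:ℂ)) - (m:ℂ) * ω *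
        (2 * (Real.pi:ℂ) * I * hbar * ((c * ω : ℝ) : ℂ))) /
        (2 * (Real.pi:ℂ) * I * hbar * (s:ℂ)) ^ 2) t :=
    (hasDerivAt_const t ((m:ℂ) * ω)).div hD hDne
  have hwI : ((m:ℂ) * ω / (2 * (Real.pi:ℂ) * I * hbar * (s:ℂ)))
      = ((-(m * ω / (2 * Real.pi * hbar * s)) : ℝ) : ℂ) * I := by
    rw [div_eq_iff hDne]
    have hπ : (Real.pi:ℂ) ≠ 0 := by exact_mod_cast Real.pi_ne_zero
    have hbc : (hbar:ℂ) ≠ 0 := by exact_mod_cast hbne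
    have hsc : (s:ℂ) ≠ 0 := by exact_mod_cast hsne
    push_cast
    ring_nf
    rw [Complex.I_sq]
    field_simp
  have hwslit : ((m:ℂ) * ω / (2 * (Real.pi:ℂ) * I * hbar * (s:ℂ))) ∈ Complex.slitPlane := by
    rw [Complex.mem_slitPlane_iff, hwI]
    right
    have hpos : 0 < m * ω / (2 * Real.pi * hbar * s) := by positivity
    rw [Complex.mul_I_im]
    simp only [Complex.ofReal_re]
    intro h
    linarith
  have hwne : ((m:ℂ) * ω / (2 * (Real.pi:ℂ) * I * hbar * (s:ℂ))) ≠ 0 := by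
    apply div_ne_zero _ hDne
    simp [hmne, hωne]
  have hpow : HasDerivAt (fun u : ℝ => ((m:ℂ) * ω
      / (2 * (Real.pi:ℂ) * I * hbar * ((Real.sin (ω * (u - t')) : ℝ) : ℂ))) ^ ((d:ℂ)/2))
      (((0 * (2 * (Real.pi:ℂ) * I * hbar * (s:ℂ)) - (m:ℂ) * ω *
        (2 * (Real.pi:ℂ) * I * hbar * ((c * ω : ℝ) : ℂ))) /
        (2 * (Real.pi:ℂ) * I * hbar * (s:ℂ)) ^ 2) •
        (((d:ℂ)/2) * ((m:ℂ) * ω / (2 * (Real.pi:ℂ) * I * hbar * (s:ℂ))) ^ ((d:ℂ)/2 - 1))) t :=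
    HasDerivAt.scomp_of_eq t
      ((Complex.hasStrictDerivAt_cpow_const (c := (d:ℂ)/2) hwslit).hasDerivAt) hw rfl
  -- real phase derivative
  have hAmp : HasDerivAt (fun u : ℝ => m * ω / (2 * hbar * Real.sin (ω * (u - t'))))
      ((0 * (2 * hbar * s) - m * ω * (2 * hbar * (c * ω))) / (2 * hbar * s) ^ 2) t :=
    (hasDerivAt_const t (m * ω)).div (hsin.const_mul (2 * hbar)) (by positivity)
  have hB : HasDerivAt (fun u : ℝ => (‖x‖ ^ 2 + ‖x'‖ ^ 2) * Real.cos (ω * (u - t'))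
      - 2 * (⟪x, x'⟫ : ℝ)) ((‖x‖ ^ 2 + ‖x'‖ ^ 2) * (-s * ω)) t :=
    ((hcos.const_mul (‖x‖ ^ 2 + ‖x'‖ ^ 2)).sub_const _)
  have hψ := hAmp.mul hB
  have hE := ((hψ.ofReal_comp).const_mul Complex.I).cexp
  -- clean up
  set E : ℂ := cexp (I * ((m * ω / (2 * hbar * s) *
      ((‖x‖^2 + ‖x'‖^2) * c - 2 * (⟪x, x'⟫:ℝ)) : ℝ) : ℂ)) with hEdef
  set ψd : ℝ := (0 * (2 * hbar * s) - m * ω * (2 * hbar * (c * ω))) / (2 * hbar * s) ^ 2 *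
      ((‖x‖^2 + ‖x'‖^2) * c - 2 * (⟪x, x'⟫:ℝ))
      + m * ω / (2 * hbar * s) * ((‖x‖^2 + ‖x'‖^2) * (-s * ω)) with hψddef
  have hderiv : deriv (fun u : ℝ => G u x) t
      = (((0 * (2 * (Real.pi:ℂ) * I * hbar * (s:ℂ)) - (m:ℂ) * ω *
          (2 * (Real.pi:ℂ) * I * hbar * ((c * ω : ℝ) : ℂ))) /
          (2 * (Real.pi:ℂ) * I * hbar * (s:ℂ)) ^ 2) •
          (((d:ℂ)/2) * ((m:ℂ) * ω / (2 * (Real.pi:ℂ) * I * hbar * (s:ℂ))) ^ ((d:ℂ)/2 - 1))) * E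
        + A * (E * (I * (ψd : ℂ))) := by
    have hfun : (fun u : ℝ => G u x) = fun u =>
        (((m:ℂ) * ω / (2 * (Real.pi:ℂ) * I * hbar
          * ((Real.sin (ω * (u - t')) : ℝ) : ℂ))) ^ ((d:ℂ)/2))
        * cexp (I * ((m * ω / (2 * hbar * Real.sin (ω * (u - t'))) *
            ((‖x‖^2 + ‖x'‖^2) * Real.cos (ω * (u - t')) - 2 * (⟪x, x'⟫:ℝ)) : ℝ) : ℂ)) :=
      funext fun u => hG u x
    rw [hfun]
    exact (hpow.mul hE).deriv
  have hsub : ((m:ℂ) * ω / (2 * (Real.pi:ℂ) * I * hbar * (s:ℂ))) ^ ((d:ℂ)/2 - 1)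
      = A / ((m:ℂ) * ω / (2 * (Real.pi:ℂ) * I * hbar * (s:ℂ))) := by
    rw [Complex.cpow_sub _ _ hwne, Complex.cpow_one, hAdef]
  rw [hderiv, hLap, hG t x, ← hsdef, ← hcdef, ← hEdef, ← hAdef, hsub]
  push_cast
  have hπc : (Real.pi:ℂ) ≠ 0 := by exact_mod_cast Real.pi_ne_zero
  have hbc : (hbar:ℂ) ≠ 0 := by exact_mod_cast hbne
  have hscc : (s:ℂ) ≠ 0 := by exact_mod_cast hsne
  have hmc : (m:ℂ) ≠ 0 := by exact_mod_cast hmne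
  have hωc : (ω:ℂ) ≠ 0 := by exact_mod_cast hωne
  have hαc : ((α:ℝ):ℂ) = (m:ℂ)*ω*c/(2*hbar*(s:ℂ)) := by rw [hαdef]; push_cast; ring
  have hβc : ((β:ℝ):ℂ) = -((m:ℂ)*ω)/(hbar*(s:ℂ)) := by rw [hβdef]; push_cast; ring
  have hψdc : ((ψd:ℝ):ℂ) = (0*(2*(hbar:ℂ)*s) - (m:ℂ)*ω*(2*(hbar:ℂ)*((c:ℂ)*ω)))/(2*(hbar:ℂ)*(s:ℂ))^2 *
        ((((‖x‖:ℝ):ℂ)^2 + ((‖x'‖:ℝ):ℂ)^2) * (c:ℂ) - 2*(((⟪x,x'⟫:ℝ)):ℂ))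
      + (m:ℂ)*ω/(2*(hbar:ℂ)*(s:ℂ)) * ((((‖x‖:ℝ):ℂ)^2 + ((‖x'‖:ℝ):ℂ)^2) * (-(s:ℂ)*(ω:ℂ))) := by
    rw [hψddef]; push_cast; ring
  have hrat : ((0 * (2 * (Real.pi:ℂ) * I * hbar * (s:ℂ)) - (m:ℂ) * ω *
        (2 * (Real.pi:ℂ) * I * hbar * ((c:ℂ) * ω))) /
        (2 * (Real.pi:ℂ) * I * hbar * (s:ℂ)) ^ 2)
        / ((m:ℂ) * ω / (2 * (Real.pi:ℂ) * I * hbar * (s:ℂ)))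
      = -((c:ℂ) * ω) / (s:ℂ) := by
    field_simp
    ring
  have hM : I * (hbar:ℂ) * ((-((c:ℂ)*ω)/(s:ℂ)) * ((d:ℂ)/2) + I * ((ψd:ℝ):ℂ))
      + (hbar:ℂ)^2/(2*(m:ℂ)) * ((d:ℂ) * I * (2*((α:ℝ):ℂ))
        - (4*((α:ℝ):ℂ)^2*((‖x‖:ℝ):ℂ)^2 + 4*((α:ℝ):ℂ)*((β:ℝ):ℂ)*(((⟪x,x'⟫:ℝ)):ℂ)
          + ((β:ℝ):ℂ)^2*((‖x'‖:ℝ):ℂ)^2))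
      - 1/2*(m:ℂ)*(ω:ℂ)^2*((‖x‖:ℝ):ℂ)^2 = 0 := by
    have hs2 : s^2 + c^2 = 1 := by
      rw [hsdef, hcdef]; exact Real.sin_sq_add_cos_sq (ω*(t - t'))
    have him : hbar * (-(c*ω)/s) * ((d:ℝ)/2) + hbar^2/(2*m) * ((d:ℝ) * (2*α)) = 0 := by
      rw [hαdef]; field_simp; ring
    have hre : -(hbar * ψd) - hbar^2/(2*m) * (4*α^2*‖x‖^2
        + 4*α*β*(⟪x,x'⟫:ℝ) + β^2*‖x'‖^2) - 1/2*m*ω^2*‖x‖^2 = 0 := by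
      rw [hψddef, hαdef, hβdef]
      field_simp
      linear_combination (4 * m * ω^2 * ‖x'‖^2) * hs2
    have key : I * (hbar:ℂ) * ((-((c:ℂ)*ω)/(s:ℂ)) * ((d:ℂ)/2) + I * ((ψd:ℝ):ℂ))
        + (hbar:ℂ)^2/(2*(m:ℂ)) * ((d:ℂ) * I * (2*((α:ℝ):ℂ))
          - (4*((α:ℝ):ℂ)^2*((‖x‖:ℝ):ℂ)^2 + 4*((α:ℝ):ℂ)*((β:ℝ):ℂ)*(((⟪x,x'⟫:ℝ)):ℂ)
            + ((β:ℝ):ℂ)^2*((‖x'‖:ℝ):ℂ)^2))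
        - 1/2*(m:ℂ)*(ω:ℂ)^2*((‖x‖:ℝ):ℂ)^2
        = ((hbar * (-(c*ω)/s) * ((d:ℝ)/2) + hbar^2/(2*m) * ((d:ℝ) * (2*α)) : ℝ) : ℂ) * I
          + ((-(hbar * ψd) - hbar^2/(2*m) * (4*α^2*‖x‖^2
              + 4*α*β*(⟪x,x'⟫:ℝ) + β^2*‖x'‖^2) - 1/2*m*ω^2*‖x‖^2 : ℝ) : ℂ) := by
      push_cast
      linear_combination ((hbar:ℂ)*((ψd:ℝ):ℂ)) * Complex.I_sq
    rw [key, him, hre]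
    simp
  simp only [smul_eq_mul]
  linear_combination (I * (hbar:ℂ) * ((d:ℂ)/2) * A * E) * hrat + (A * E) * hM
end

section
/- Fix t' ∈ ℝ and x' ∈ ℝ^d, and define G : (t', ∞) × ℝ^d → ℂ by G(t,x) = ( m/(2πiħ(t − t')) )^{d/2} · exp( i·m·‖x − x'‖²/(2ħ(t − t')) ), where w^{d/2} denotes the principal branch of the complex power. Then G satisfies the free Schrödinger equation iħ·∂G/∂t + (ħ²/(2m))·Δ_x G = 0 at every point (t,x) with t > t'. -/
open scoped RealInnerProductSpace

/-- derivative of `exp (μ(a+br+r²))`. -/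
lemma quad_deriv (μ : ℂ) (a b r : ℝ) :
    HasDerivAt (fun r : ℝ => Complex.exp (μ * ((a + b*r + r^2 : ℝ) : ℂ)))
      (Complex.exp (μ * ((a + b*r + r^2 : ℝ):ℂ)) * (μ * ((b + 2*r : ℝ):ℂ))) r := by
  have h1 : HasDerivAt (fun r:ℝ => b*r) b r := by
    simpa using (hasDerivAt_id r).const_mul b
  have h2 : HasDerivAt (fun r:ℝ => r^2) (2*r) r := by
    simpa using hasDerivAt_pow 2 r
  have hp : HasDerivAt (fun r : ℝ => a + b*r + r^2) (b + 2*r) r := by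
    simpa [add_assoc] using ((h1.add h2).const_add a)
  exact (hp.ofReal_comp.const_mul μ).cexp

lemma norm_expand {d : ℕ} (z x' : EuclideanSpace ℝ (Fin d)) (j : Fin d) (r : ℝ) :
    ‖(z + r • EuclideanSpace.single j (1:ℝ)) - x'‖^2
      = ‖z - x'‖^2 + (2*((z - x') j))*r + r^2 := by
  have h : (z + r • EuclideanSpace.single j (1:ℝ)) - x'
      = (z - x') + r • EuclideanSpace.single j (1:ℝ) := by abel
  rw [h, norm_add_sq_real, real_inner_smul_right, EuclideanSpace.inner_single_right,
    norm_smul, EuclideanSpace.norm_single]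
  simp [mul_pow, sq_abs]
  ring

lemma aux_Kc (m hbar τ : ℝ) (hm : 0 < m) (hh : 0 < hbar) (hτ : 0 < τ) :
    ((m:ℂ)/(2*(Real.pi:ℂ)*Complex.I*(hbar:ℂ))) * ((τ:ℂ))⁻¹
      = ((m/(2*Real.pi*hbar*τ) : ℝ):ℂ) * (-Complex.I) := by
  have hpi := Real.pi_pos
  have hp' : ((Real.pi:ℂ)) ≠ 0 := by exact_mod_cast hpi.ne'
  have hh' : ((hbar:ℂ)) ≠ 0 := by exact_mod_cast hh.ne'
  have hτ' : ((τ:ℂ)) ≠ 0 := by exact_mod_cast hτ.ne'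
  push_cast
  rw [div_mul_eq_mul_div, div_eq_iff
    (by simp [hp', hh', Complex.I_ne_zero] : 2*(Real.pi:ℂ)*Complex.I*(hbar:ℂ) ≠ 0)]
  field_simp
  ring_nf
  simp [Complex.I_sq]

lemma key_identity (h m τ q dd : ℂ) (hh : h ≠ 0) (hm : m ≠ 0) (hτ : τ ≠ 0) :
    Complex.I * h * (-(dd/2)/τ + (Complex.I*m*q/(2*h)) * (-1/τ^2))
      + h^2/(2*m) * (2*dd*(Complex.I*m/(2*h*τ)) + 4*(Complex.I*m/(2*h*τ))^2*q) = 0 := by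
  field_simp
  ring_nf

/-- Fix `ħ > 0`, `m > 0`, `d ≥ 1`, `t' ∈ ℝ` and `x' ∈ ℝ^d`.  The free
propagator `G(t,x) = (m/(2πiħ(t−t')))^{d/2}·exp(i·m·‖x−x'‖²/(2ħ(t−t')))` (with the principal
branch of the complex power) satisfies `iħ·∂G/∂t + (ħ²/(2m))·Δ_x G = 0` for `t > t'`. -/
theorem free_propagator_schrodinger
    (hbar m : ℝ) (hhbar : 0 < hbar) (hm : 0 < m)
    (d : ℕ) (hd : 1 ≤ d) (t' : ℝ) (x' : EuclideanSpace ℝ (Fin d))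
    (G : ℝ → EuclideanSpace ℝ (Fin d) → ℂ)
    (hG : ∀ (t : ℝ) (x : EuclideanSpace ℝ (Fin d)),
      G t x = ((m : ℂ)
            / (2 * (Real.pi : ℂ) * Complex.I * (hbar : ℂ) * ((t : ℂ) - (t' : ℂ)))) ^ ((d : ℂ) / 2)
        * Complex.exp (Complex.I *
            ((m * ‖x - x'‖ ^ 2 / (2 * hbar * (t - t')) : ℝ) : ℂ))) :
    ∀ (t : ℝ) (x : EuclideanSpace ℝ (Fin d)), t' < t →
      Complex.I * (hbar : ℂ) * deriv (fun s : ℝ => G s x) t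
        + ((hbar : ℂ) ^ 2 / (2 * (m : ℂ))) * laplacian (G t) x = 0 := by
  intro t x ht
  have hm' : ((m:ℂ)) ≠ 0 := by exact_mod_cast hm.ne'
  have hh' : ((hbar:ℂ)) ≠ 0 := by exact_mod_cast hhbar.ne'
  have hp' : ((Real.pi:ℂ)) ≠ 0 := by exact_mod_cast Real.pi_pos.ne'
  have hτc : ((t:ℂ) - (t':ℂ)) ≠ 0 := by
    rw [sub_ne_zero]
    exact_mod_cast ht.ne'
  set τc : ℂ := (t:ℂ) - (t':ℂ) with hτcdef
  set Kc : ℂ := (m:ℂ)/(2*(Real.pi:ℂ)*Complex.I*(hbar:ℂ)) with hKcdef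
  have hKc0 : Kc ≠ 0 := by
    rw [hKcdef]
    exact div_ne_zero hm' (by simp [hp', hh', Complex.I_ne_zero])
  set q : ℝ := ‖x - x'‖^2 with hqdef
  set μ : ℂ := Complex.I * (m:ℂ) / (2*(hbar:ℂ)*τc) with hμdef
  set Cc : ℂ := Complex.I * (m:ℂ) * (q:ℂ) / (2*(hbar:ℂ)) with hCcdef
  set W : ℂ → ℂ := fun z => Kc * ((z - (t':ℂ))⁻¹) with hWdef
  set A : ℂ := W (t:ℂ) ^ ((d:ℂ)/2) with hAdef
  set E : EuclideanSpace ℝ (Fin d) → ℂ :=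
    fun z => Complex.exp (μ * ((‖z - x'‖^2 : ℝ):ℂ)) with hEdef
  clear_value τc Kc q μ Cc W A E
  have hτc' : ((t:ℂ) - (t':ℂ)) ≠ 0 := by rw [← hτcdef]; exact hτc
  -- G t as A * E
  have hGt : G t = fun z => A * E z := by
    funext z
    rw [hG, hAdef, hEdef]
    congr 1
    · congr 1
      rw [hWdef, hKcdef]
      simp only []
      rw [div_mul_eq_div_div, div_eq_mul_inv]
    · congr 1
      rw [hμdef, div_mul_eq_div_div (m * ‖z - x'‖^2) (2*hbar) (t - t')]
      push_cast
      rw [← hτcdef]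
      ring
  -- first directional derivative
  have hfirst : ∀ (j : Fin d) (z : EuclideanSpace ℝ (Fin d)),
      dirDeriv (EuclideanSpace.single j (1:ℝ)) (fun y => A * E y) z
        = A * μ * ((2*((z - x') j) : ℝ):ℂ) * E z := by
    intro j z
    rw [dirDeriv]
    have funeq : (fun r : ℝ => (fun y => A * E y) (z + r • EuclideanSpace.single j (1:ℝ)))
        = fun r : ℝ => A * Complex.exp
            (μ * ((‖z - x'‖^2 + (2*((z - x') j))*r + r^2 : ℝ):ℂ)) := by
      funext r
      simp only [hEdef]
      rw [norm_expand]
    rw [funeq, ((quad_deriv μ (‖z - x'‖^2) (2*((z - x') j)) 0).const_mul A).deriv]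
    norm_num [hEdef]
    push_cast
    ring
  -- second directional derivative
  have hsecond : ∀ (j : Fin d),
      dirDeriv (EuclideanSpace.single j (1:ℝ))
        (dirDeriv (EuclideanSpace.single j (1:ℝ)) (G t)) x
        = A * E x * (2*μ + 4*μ^2 * (((((x - x') j))^2 : ℝ):ℂ)) := by
    intro j
    rw [hGt, dirDeriv]
    set c : ℝ := (x - x') j with hcdef
    have funeq : (fun r : ℝ => dirDeriv (EuclideanSpace.single j (1:ℝ)) (fun y => A * E y)
          (x + r • EuclideanSpace.single j (1:ℝ)))
        = fun r : ℝ => (A * μ) * ((2*(c + r) : ℝ):ℂ)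
            * Complex.exp (μ * ((‖x - x'‖^2 + (2*c)*r + r^2 : ℝ):ℂ)) := by
      funext r
      rw [hfirst]
      have happ : ((x + r • EuclideanSpace.single j (1:ℝ)) - x') j = c + r := by
        simp [hcdef]
        ring
      rw [happ]
      simp only [hEdef]
      rw [norm_expand]
    rw [funeq]
    have hlin : HasDerivAt (fun r : ℝ => (A * μ) * ((2*(c + r) : ℝ):ℂ)) ((A*μ) * ((2:ℝ):ℂ)) 0 := by
      have hr : HasDerivAt (fun r : ℝ => 2*(c + r)) 2 0 := by
        simpa using ((hasDerivAt_id (0:ℝ)).const_add c).const_mul 2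
      exact hr.ofReal_comp.const_mul (A*μ)
    have := (hlin.mul (quad_deriv μ (‖x - x'‖^2) (2*c) 0)).deriv
    refine this.trans ?_
    norm_num [hEdef]
    push_cast
    ring
  -- laplacian
  have hq : (∑ j : Fin d, ((x - x') j)^2) = q := by
    rw [hqdef, EuclideanSpace.norm_eq, Real.sq_sqrt (by positivity)]
    simp [sq_abs]
  have hlap : laplacian (G t) x = A * E x * (2*(d:ℂ)*μ + 4*μ^2*(q:ℂ)) := by
    simp only [laplacian]
    rw [Finset.sum_congr rfl (fun j _ => hsecond j), ← Finset.mul_sum]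
    congr 1
    rw [Finset.sum_add_distrib, Finset.sum_const, Finset.card_univ, Fintype.card_fin,
      ← Finset.mul_sum, ← Complex.ofReal_sum, hq]
    push_cast [nsmul_eq_mul]
    ring
  -- time derivative
  have hW : HasDerivAt W (Kc * (-1/τc^2)) (t:ℂ) := by
    have h := (((hasDerivAt_id ((t:ℂ))).sub_const (t':ℂ)).inv hτc').const_mul Kc
    simpa [hWdef, hτcdef] using h
  have hWt : W (t:ℂ) = ((m/(2*Real.pi*hbar*(t - t')) : ℝ):ℂ) * (-Complex.I) := by
    rw [hWdef]
    simp only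
    rw [show ((t:ℂ) - (t':ℂ)) = (((t - t' : ℝ)):ℂ) by push_cast; ring, hKcdef]
    exact aux_Kc m hbar (t - t') hm hhbar (sub_pos.mpr ht)
  have hmem : W (t:ℂ) ∈ Complex.slitPlane := by
    rw [Complex.mem_slitPlane_iff, hWt]
    right
    have hpos : (0:ℝ) < m/(2*Real.pi*hbar*(t - t')) := by
      have := Real.pi_pos
      have := sub_pos.mpr ht
      positivity
    simp only [Complex.mul_im, Complex.ofReal_re, Complex.ofReal_im, Complex.neg_im,
      Complex.I_im, Complex.neg_re, Complex.I_re, mul_one, mul_zero, zero_mul, add_zero,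
      mul_neg, neg_zero]
    exact neg_ne_zero.mpr hpos.ne'
  have hW0 : W (t:ℂ) ≠ 0 := Complex.slitPlane_ne_zero hmem
  have hA : HasDerivAt (fun z => W z ^ ((d:ℂ)/2))
      (((d:ℂ)/2) * W (t:ℂ) ^ ((d:ℂ)/2 - 1) * (Kc * (-1/τc^2))) (t:ℂ) :=
    hW.cpow_const hmem
  have hAval : ((d:ℂ)/2) * W (t:ℂ) ^ ((d:ℂ)/2 - 1) * (Kc * (-1/τc^2))
      = -((d:ℂ)/2) * A / τc := by
    rw [Complex.cpow_sub _ _ hW0, Complex.cpow_one, ← hAdef]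
    rw [show W (t:ℂ) = Kc * τc⁻¹ from by rw [hWdef, hτcdef]]
    field_simp
  have hEc : HasDerivAt (fun z : ℂ => Complex.exp (Cc * ((z - (t':ℂ))⁻¹)))
      (Complex.exp (Cc * τc⁻¹) * (Cc * (-1/τc^2))) (t:ℂ) := by
    have h := ((((hasDerivAt_id ((t:ℂ))).sub_const (t':ℂ)).inv hτc').const_mul Cc).cexp
    simpa [hτcdef] using h
  have htotal := (hA.mul hEc).comp_ofReal
  have hfun : (fun s : ℝ => G s x)
      = fun s : ℝ => W (s:ℂ) ^ ((d:ℂ)/2) * Complex.exp (Cc * (((s:ℂ) - (t':ℂ))⁻¹)) := by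
    funext s
    rw [hG]
    congr 1
    · congr 1
      rw [hWdef, hKcdef]
      simp only []
      rw [div_mul_eq_div_div, div_eq_mul_inv]
    · congr 1
      rw [hCcdef, hqdef, div_mul_eq_div_div (m * ‖x - x'‖^2) (2*hbar) (s - t')]
      push_cast
      ring
  have hEx : Complex.exp (Cc * τc⁻¹) = E x := by
    rw [hEdef]
    congr 1
    rw [hCcdef, hμdef, ← hqdef]
    ring
  have hderiv : deriv (fun s : ℝ => G s x) t
      = (-((d:ℂ)/2) * A / τc) * E x + A * (E x * (Cc * (-1/τc^2))) := by
    rw [hfun]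
    refine htotal.deriv.trans ?_
    rw [hAval, show ((t:ℂ)-(t':ℂ)) = τc from hτcdef.symm, hEx, hAdef]
  rw [hderiv, hlap]
  have key := key_identity (hbar:ℂ) (m:ℂ) τc (q:ℂ) (d:ℂ) hh' hm' hτc
  rw [hμdef, hCcdef]
  linear_combination (A * E x) * key
end
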